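/- Every characteristic vector K on G_n satisfying v·v + 2 ≤ K·v ≤ -v·v for all v and whose first four pairings are (1, 0, -1, -3) but which has some nonzero pairing among positions 5,...,n+3 admits a bad full path; hence the only such basic vector is (1,0,-1,-3,0,...,0). -/
import Mathlib


/-- Weight of vertex `i` (0-indexed) in the plumbing graph `G n` for `Σ(2,3,6n+1)`. -/
def wt (i : ℕ) : ℤ :=
  if i = 0 then -1 else if i = 1 then -2 else if i = 2 then -3 else if i = 3 then -7 else -2

/-- Adjacency: vertex 0 joined to 1,2,3; vertices 3,4,…,n+2 form a chain. -/
def adjG (i j : ℕ) : Prop :=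
  (i = 0 ∧ (j = 1 ∨ j = 2 ∨ j = 3)) ∨ (j = 0 ∧ (i = 1 ∨ i = 2 ∨ i = 3)) ∨
    (3 ≤ i ∧ 3 ≤ j ∧ (i + 1 = j ∨ j + 1 = i))

instance (i j : ℕ) : Decidable (adjG i j) := by unfold adjG; infer_instance

/-- The intersection matrix of the plumbing graph `G n` (n+3 vertices). -/
def MG (n : ℕ) : Matrix (Fin (n + 3)) (Fin (n + 3)) ℤ :=
  fun i j => if i = j then wt i.val else if adjG i.val j.val then 1 else 0

/-- Adding `2 PD[v]` to a characteristic vector recorded by its pairing sequence. -/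
def applyMove {V : Type*} (M : Matrix V V ℤ) (K : V → ℤ) (v : V) : V → ℤ :=
  fun i => K i + 2 * M v i

/-- Result of performing the moves in the list `l` in order. -/
def pathEnd {V : Type*} (M : Matrix V V ℤ) (K : V → ℤ) (l : List V) : V → ℤ :=
  l.foldl (applyMove M) K

/-- Each move in the list is performed at a vertex `v` with `K·v + v·v = 0`. -/
def PathLegal {V : Type*} (M : Matrix V V ℤ) : (V → ℤ) → List V → Prop
  | _, [] => True
  | K, v :: l => K v + M v v = 0 ∧ PathLegal M (applyMove M K v) l

/-- `v·v + 2 ≤ K·v ≤ -v·v` for every vertex `v`. -/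
def InBounds {V : Type*} (M : Matrix V V ℤ) (K : V → ℤ) : Prop :=
  ∀ v, M v v + 2 ≤ K v ∧ K v ≤ -(M v v)

/-- `K` supports a good full path: a legal sequence of moves ending at `K'` with
`-K'` satisfying the inequalities. -/
def HasGoodPath {V : Type*} (M : Matrix V V ℤ) (K : V → ℤ) : Prop :=
  ∃ l, PathLegal M K l ∧ InBounds M (fun v => -(pathEnd M K l v))

/-- A bad full path: legal moves reaching a vector with `K'·v + v·v > 0` for some `v`. -/
def BadFullPath {V : Type*} (M : Matrix V V ℤ) (K : V → ℤ) (l : List V) : Prop :=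
  PathLegal M K l ∧ ∃ v, pathEnd M K l v + M v v > 0

/-- The basic vectors `K_j`, `1 ≤ j ≤ n+1`, recorded as pairing sequences. -/
def Kv (n j : ℕ) : Fin (n + 3) → ℤ := fun i =>
  if i.val = 0 then 1 else if i.val = 1 then 0 else if i.val = 2 then -1
  else if i.val = 3 then (if j = 2 then -3 else -5)
  else if 3 ≤ j ∧ i.val = j + 1 then 2 else 0


section General

variable {V : Type*} (M : Matrix V V ℤ)

lemma pathEnd_append (K : V → ℤ) (l₁ l₂ : List V) :
    pathEnd M K (l₁ ++ l₂) = pathEnd M (pathEnd M K l₁) l₂ := by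
  simp [pathEnd, List.foldl_append]

lemma PathLegal_append : ∀ (l₁ : List V) (K : V → ℤ), PathLegal M K l₁ →
    ∀ l₂, PathLegal M (pathEnd M K l₁) l₂ → PathLegal M K (l₁ ++ l₂) := by
  intro l₁
  induction l₁ with
  | nil => intro K _ l₂ h; exact h
  | cons v l ih =>
    intro K hleg l₂ h2
    obtain ⟨hv, hl⟩ := hleg
    exact ⟨hv, ih _ hl l₂ h2⟩

lemma bad_persists (hoff : ∀ u w : V, u ≠ w → 0 ≤ M u w) :
    ∀ (l : List V) (K : V → ℤ) (w : V), 0 < K w + M w w → PathLegal M K l →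
      0 < pathEnd M K l w + M w w := by
  intro l
  induction l with
  | nil => intro K w hw _; exact hw
  | cons v l ih =>
    intro K w hw hleg
    obtain ⟨hv, hl⟩ := hleg
    by_cases hvw : v = w
    · subst hvw; omega
    · have h1 : 0 ≤ M v w := hoff v w hvw
      apply ih _ _ _ hl
      simp only [applyMove]
      omega

lemma good_move (hoff : ∀ u w : V, u ≠ w → 0 ≤ M u w) (hsym : ∀ u w : V, M u w = M w u) :
    ∀ (lg : List V) (K : V → ℤ), PathLegal M K lg →
      InBounds M (fun x => -(pathEnd M K lg x)) →
      ∀ v, K v + M v v = 0 → HasGoodPath M (applyMove M K v) := by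
  intro lg
  induction lg with
  | nil =>
    intro K _ hg v hv
    exfalso
    have h := (hg v).1
    simp only [pathEnd, List.foldl_nil] at h
    omega
  | cons u lg ih =>
    intro K hleg hg v hv
    obtain ⟨hu, hl⟩ := hleg
    by_cases hvu : v = u
    · subst hvu; exact ⟨lg, hl, hg⟩
    · by_cases hz : M u v = 0
      · have hv' : (applyMove M K u) v + M v v = 0 := by
          simp only [applyMove]; omega
        obtain ⟨l₂, hl₂, hg₂⟩ := ih (applyMove M K u) hl hg v hv'
        have hcomm : applyMove M (applyMove M K v) u = applyMove M (applyMove M K u) v := by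
          funext i; simp only [applyMove]; ring
        have hz' : M v u = 0 := (hsym v u).trans hz
        refine ⟨u :: l₂, ⟨?_, ?_⟩, ?_⟩
        · simp only [applyMove]; omega
        · show PathLegal M (applyMove M (applyMove M K v) u) l₂
          rw [hcomm]; exact hl₂
        · show InBounds M (fun x => -(pathEnd M (applyMove M (applyMove M K v) u) l₂ x))
          rw [hcomm]; exact hg₂
      · exfalso
        have h0 : (0:ℤ) ≤ M u v := hoff u v (fun h => hvu h.symm)
        have hb : 0 < (applyMove M K u) v + M v v := by
          simp only [applyMove]; omega
        have hend := bad_persists M hoff lg (applyMove M K u) v hb hl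
        have hgv := (hg v).1
        simp only [pathEnd, List.foldl_cons] at hgv hend
        omega

lemma good_reach (hoff : ∀ u w : V, u ≠ w → 0 ≤ M u w) (hsym : ∀ u w : V, M u w = M w u) :
    ∀ (l : List V) (K : V → ℤ), HasGoodPath M K → PathLegal M K l →
      HasGoodPath M (pathEnd M K l) := by
  intro l
  induction l with
  | nil => intro K h _; exact h
  | cons v l ih =>
    intro K hgood hleg
    obtain ⟨hv, hl⟩ := hleg
    obtain ⟨lg, hlg, hgd⟩ := hgood
    exact ih _ (good_move M hoff hsym lg K hlg hgd v hv) hl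

lemma no_good_of_bad (hoff : ∀ u w : V, u ≠ w → 0 ≤ M u w) (hsym : ∀ u w : V, M u w = M w u)
    {K : V → ℤ} {l : List V} (hgood : HasGoodPath M K) (hbad : BadFullPath M K l) : False := by
  obtain ⟨hleg, w, hw⟩ := hbad
  obtain ⟨lg, hlg, hgd⟩ := good_reach M hoff hsym l K hgood hleg
  have h1 := bad_persists M hoff lg _ w hw hlg
  have h2 := (hgd w).1
  simp only at h2
  omega

end General

/-- helper: the `m`-th vertex of `G n`. -/
def cv (n m : ℕ) : Fin (n + 3) := ⟨m % (n + 3), Nat.mod_lt _ (by omega)⟩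

lemma cv_val (n m : ℕ) (h : m < n + 3) : (cv n m).val = m := Nat.mod_eq_of_lt h

lemma cv_eq (n m : ℕ) (h : m < n + 3) : cv n m = ⟨m, h⟩ := Fin.ext (cv_val n m h)

lemma wt_tail {m : ℕ} (h : 4 ≤ m) : wt m = -2 := by
  unfold wt
  rw [if_neg (by omega), if_neg (by omega), if_neg (by omega), if_neg (by omega)]

lemma MG_cv (n a b : ℕ) (ha : a < n + 3) (hb : b < n + 3) :
    MG n (cv n a) (cv n b) = if a = b then wt a else if adjG a b then 1 else 0 := by
  unfold MG
  by_cases hab : a = b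
  · subst hab
    rw [if_pos rfl, if_pos rfl, cv_val n a ha]
  · have hne : cv n a ≠ cv n b := by
      intro h
      have := congrArg Fin.val h
      rw [cv_val n a ha, cv_val n b hb] at this
      exact hab this
    rw [if_neg hne, if_neg hab, cv_val n a ha, cv_val n b hb]

lemma MG_offdiag (n : ℕ) (u w : Fin (n+3)) (h : u ≠ w) : 0 ≤ MG n u w := by
  unfold MG
  rw [if_neg h]
  split <;> norm_num

lemma MG_symm (n : ℕ) (u w : Fin (n+3)) : MG n u w = MG n w u := by
  unfold MG
  rcases eq_or_ne u w with rfl | h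
  · rfl
  · have h' : w ≠ u := h.symm
    rw [if_neg h, if_neg h']
    have hiff : adjG u.val w.val ↔ adjG w.val u.val := by
      unfold adjG; constructor <;> (intro hh; omega)
    by_cases ha : adjG u.val w.val
    · rw [if_pos ha, if_pos (hiff.mp ha)]
    · rw [if_neg ha, if_neg (fun hh => ha (hiff.mpr hh))]

lemma phase1 (n : ℕ) (hn : 2 ≤ n) : ∀ (k : ℕ) (K : Fin (n+3) → ℤ), 4 + k ≤ n + 2 →
    K (cv n (4+k)) = 2 → (∀ m, 4 ≤ m → m < 4 + k → K (cv n m) = 0) →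
    ∃ l, PathLegal (MG n) K l ∧ (∀ m, m ≤ 3 → pathEnd (MG n) K l (cv n m) = K (cv n m)) ∧
      pathEnd (MG n) K l (cv n 4) = 2 := by
  intro k
  induction k with
  | zero => intro K _ h2 _; exact ⟨[], trivial, fun m _ => rfl, h2⟩
  | succ k ih =>
    intro K hle h2 hz
    have hlt : 4 + (k+1) < n + 3 := by omega
    have hMjj : MG n (cv n (4+(k+1))) (cv n (4+(k+1))) = -2 := by
      rw [MG_cv n _ _ hlt hlt, if_pos rfl]; exact wt_tail (by omega)
    have hlegal : K (cv n (4+(k+1))) + MG n (cv n (4+(k+1))) (cv n (4+(k+1))) = 0 := by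
      rw [h2, hMjj]; ring
    have hMadj : MG n (cv n (4+(k+1))) (cv n (4+k)) = 1 := by
      rw [MG_cv n _ _ hlt (by omega), if_neg (by omega), if_pos (by unfold adjG; omega)]
    have hMfar : ∀ m, m < n + 3 → m < 4 + k → MG n (cv n (4+(k+1))) (cv n m) = 0 := by
      intro m hm1 hm2
      rw [MG_cv n _ _ hlt hm1, if_neg (by omega), if_neg (by unfold adjG; omega)]
    have hK'4k : (applyMove (MG n) K (cv n (4+(k+1)))) (cv n (4+k)) = 2 := by
      have h04 : K (cv n (4+k)) = 0 := hz (4+k) (by omega) (by omega)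
      simp only [applyMove, hMadj, h04]; ring
    have hK'z : ∀ m, 4 ≤ m → m < 4 + k → (applyMove (MG n) K (cv n (4+(k+1)))) (cv n m) = 0 := by
      intro m hm1 hm2
      have h0m : K (cv n m) = 0 := hz m hm1 (by omega)
      simp only [applyMove, hMfar m (by omega) hm2, h0m]; ring
    obtain ⟨l, hl, hh, h4⟩ := ih (applyMove (MG n) K (cv n (4+(k+1)))) (by omega) hK'4k hK'z
    refine ⟨cv n (4+(k+1)) :: l, ⟨hlegal, hl⟩, ?_, h4⟩
    intro m hm
    have hstep : pathEnd (MG n) K (cv n (4+(k+1)) :: l) (cv n m)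
        = pathEnd (MG n) (applyMove (MG n) K (cv n (4+(k+1)))) l (cv n m) := rfl
    rw [hstep, hh m hm]
    simp only [applyMove, hMfar m (by omega) (by omega)]; ring


lemma phase2 (n : ℕ) (hn : 2 ≤ n) (K : Fin (n+3) → ℤ)
    (h0 : K (cv n 0) = 1) (h1 : K (cv n 1) = 0) (h2 : K (cv n 2) = -1)
    (h3 : K (cv n 3) = -3) (h4 : K (cv n 4) = 2) :
    ∃ l, PathLegal (MG n) K l ∧ pathEnd (MG n) K l (cv n 2) + MG n (cv n 2) (cv n 2) > 0 := by
  have m00 : MG n (cv n 0) (cv n 0) = -1 := by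
    rw [MG_cv n 0 0 (by omega) (by omega)]; norm_num [wt, adjG]
  have m01 : MG n (cv n 0) (cv n 1) = 1 := by
    rw [MG_cv n 0 1 (by omega) (by omega)]; norm_num [wt, adjG]
  have m02 : MG n (cv n 0) (cv n 2) = 1 := by
    rw [MG_cv n 0 2 (by omega) (by omega)]; norm_num [wt, adjG]
  have m03 : MG n (cv n 0) (cv n 3) = 1 := by
    rw [MG_cv n 0 3 (by omega) (by omega)]; norm_num [wt, adjG]
  have m04 : MG n (cv n 0) (cv n 4) = 0 := by
    rw [MG_cv n 0 4 (by omega) (by omega)]; norm_num [wt, adjG]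
  have m10 : MG n (cv n 1) (cv n 0) = 1 := by
    rw [MG_cv n 1 0 (by omega) (by omega)]; norm_num [wt, adjG]
  have m11 : MG n (cv n 1) (cv n 1) = -2 := by
    rw [MG_cv n 1 1 (by omega) (by omega)]; norm_num [wt, adjG]
  have m12 : MG n (cv n 1) (cv n 2) = 0 := by
    rw [MG_cv n 1 2 (by omega) (by omega)]; norm_num [wt, adjG]
  have m13 : MG n (cv n 1) (cv n 3) = 0 := by
    rw [MG_cv n 1 3 (by omega) (by omega)]; norm_num [wt, adjG]
  have m14 : MG n (cv n 1) (cv n 4) = 0 := by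
    rw [MG_cv n 1 4 (by omega) (by omega)]; norm_num [wt, adjG]
  have m20 : MG n (cv n 2) (cv n 0) = 1 := by
    rw [MG_cv n 2 0 (by omega) (by omega)]; norm_num [wt, adjG]
  have m21 : MG n (cv n 2) (cv n 1) = 0 := by
    rw [MG_cv n 2 1 (by omega) (by omega)]; norm_num [wt, adjG]
  have m22 : MG n (cv n 2) (cv n 2) = -3 := by
    rw [MG_cv n 2 2 (by omega) (by omega)]; norm_num [wt, adjG]
  have m23 : MG n (cv n 2) (cv n 3) = 0 := by
    rw [MG_cv n 2 3 (by omega) (by omega)]; norm_num [wt, adjG]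
  have m24 : MG n (cv n 2) (cv n 4) = 0 := by
    rw [MG_cv n 2 4 (by omega) (by omega)]; norm_num [wt, adjG]
  have m30 : MG n (cv n 3) (cv n 0) = 1 := by
    rw [MG_cv n 3 0 (by omega) (by omega)]; norm_num [wt, adjG]
  have m31 : MG n (cv n 3) (cv n 1) = 0 := by
    rw [MG_cv n 3 1 (by omega) (by omega)]; norm_num [wt, adjG]
  have m32 : MG n (cv n 3) (cv n 2) = 0 := by
    rw [MG_cv n 3 2 (by omega) (by omega)]; norm_num [wt, adjG]
  have m33 : MG n (cv n 3) (cv n 3) = -7 := by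
    rw [MG_cv n 3 3 (by omega) (by omega)]; norm_num [wt, adjG]
  have m34 : MG n (cv n 3) (cv n 4) = 1 := by
    rw [MG_cv n 3 4 (by omega) (by omega)]; norm_num [wt, adjG]
  have m40 : MG n (cv n 4) (cv n 0) = 0 := by
    rw [MG_cv n 4 0 (by omega) (by omega)]; norm_num [wt, adjG]
  have m41 : MG n (cv n 4) (cv n 1) = 0 := by
    rw [MG_cv n 4 1 (by omega) (by omega)]; norm_num [wt, adjG]
  have m42 : MG n (cv n 4) (cv n 2) = 0 := by
    rw [MG_cv n 4 2 (by omega) (by omega)]; norm_num [wt, adjG]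
  have m43 : MG n (cv n 4) (cv n 3) = 1 := by
    rw [MG_cv n 4 3 (by omega) (by omega)]; norm_num [wt, adjG]
  have m44 : MG n (cv n 4) (cv n 4) = -2 := by
    rw [MG_cv n 4 4 (by omega) (by omega)]; norm_num [wt, adjG]
  have v0_0 : K (cv n 0) = 1 := h0
  have v0_1 : K (cv n 1) = 0 := h1
  have v0_2 : K (cv n 2) = -1 := h2
  have v0_3 : K (cv n 3) = -3 := h3
  have v0_4 : K (cv n 4) = 2 := h4
  set K1 : Fin (n+3) → ℤ := applyMove (MG n) K (cv n 0) with hdef1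
  have v1_0 : K1 (cv n 0) = -1 := by
    rw [hdef1]; simp only [applyMove, m00, v0_0]; norm_num
  have v1_1 : K1 (cv n 1) = 2 := by
    rw [hdef1]; simp only [applyMove, m01, v0_1]; norm_num
  have v1_2 : K1 (cv n 2) = 1 := by
    rw [hdef1]; simp only [applyMove, m02, v0_2]; norm_num
  have v1_3 : K1 (cv n 3) = -1 := by
    rw [hdef1]; simp only [applyMove, m03, v0_3]; norm_num
  have v1_4 : K1 (cv n 4) = 2 := by
    rw [hdef1]; simp only [applyMove, m04, v0_4]; norm_num
  have leg1 : K (cv n 0) + MG n (cv n 0) (cv n 0) = 0 := by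
    rw [v0_0, m00]; norm_num
  set K2 : Fin (n+3) → ℤ := applyMove (MG n) K1 (cv n 1) with hdef2
  have v2_0 : K2 (cv n 0) = 1 := by
    rw [hdef2]; simp only [applyMove, m10, v1_0]; norm_num
  have v2_1 : K2 (cv n 1) = -2 := by
    rw [hdef2]; simp only [applyMove, m11, v1_1]; norm_num
  have v2_2 : K2 (cv n 2) = 1 := by
    rw [hdef2]; simp only [applyMove, m12, v1_2]; norm_num
  have v2_3 : K2 (cv n 3) = -1 := by
    rw [hdef2]; simp only [applyMove, m13, v1_3]; norm_num
  have v2_4 : K2 (cv n 4) = 2 := by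
    rw [hdef2]; simp only [applyMove, m14, v1_4]; norm_num
  have leg2 : K1 (cv n 1) + MG n (cv n 1) (cv n 1) = 0 := by
    rw [v1_1, m11]; norm_num
  set K3 : Fin (n+3) → ℤ := applyMove (MG n) K2 (cv n 0) with hdef3
  have v3_0 : K3 (cv n 0) = -1 := by
    rw [hdef3]; simp only [applyMove, m00, v2_0]; norm_num
  have v3_1 : K3 (cv n 1) = 0 := by
    rw [hdef3]; simp only [applyMove, m01, v2_1]; norm_num
  have v3_2 : K3 (cv n 2) = 3 := by
    rw [hdef3]; simp only [applyMove, m02, v2_2]; norm_num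
  have v3_3 : K3 (cv n 3) = 1 := by
    rw [hdef3]; simp only [applyMove, m03, v2_3]; norm_num
  have v3_4 : K3 (cv n 4) = 2 := by
    rw [hdef3]; simp only [applyMove, m04, v2_4]; norm_num
  have leg3 : K2 (cv n 0) + MG n (cv n 0) (cv n 0) = 0 := by
    rw [v2_0, m00]; norm_num
  set K4 : Fin (n+3) → ℤ := applyMove (MG n) K3 (cv n 2) with hdef4
  have v4_0 : K4 (cv n 0) = 1 := by
    rw [hdef4]; simp only [applyMove, m20, v3_0]; norm_num
  have v4_1 : K4 (cv n 1) = 0 := by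
    rw [hdef4]; simp only [applyMove, m21, v3_1]; norm_num
  have v4_2 : K4 (cv n 2) = -3 := by
    rw [hdef4]; simp only [applyMove, m22, v3_2]; norm_num
  have v4_3 : K4 (cv n 3) = 1 := by
    rw [hdef4]; simp only [applyMove, m23, v3_3]; norm_num
  have v4_4 : K4 (cv n 4) = 2 := by
    rw [hdef4]; simp only [applyMove, m24, v3_4]; norm_num
  have leg4 : K3 (cv n 2) + MG n (cv n 2) (cv n 2) = 0 := by
    rw [v3_2, m22]; norm_num
  set K5 : Fin (n+3) → ℤ := applyMove (MG n) K4 (cv n 0) with hdef5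
  have v5_0 : K5 (cv n 0) = -1 := by
    rw [hdef5]; simp only [applyMove, m00, v4_0]; norm_num
  have v5_1 : K5 (cv n 1) = 2 := by
    rw [hdef5]; simp only [applyMove, m01, v4_1]; norm_num
  have v5_2 : K5 (cv n 2) = -1 := by
    rw [hdef5]; simp only [applyMove, m02, v4_2]; norm_num
  have v5_3 : K5 (cv n 3) = 3 := by
    rw [hdef5]; simp only [applyMove, m03, v4_3]; norm_num
  have v5_4 : K5 (cv n 4) = 2 := by
    rw [hdef5]; simp only [applyMove, m04, v4_4]; norm_num
  have leg5 : K4 (cv n 0) + MG n (cv n 0) (cv n 0) = 0 := by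
    rw [v4_0, m00]; norm_num
  set K6 : Fin (n+3) → ℤ := applyMove (MG n) K5 (cv n 1) with hdef6
  have v6_0 : K6 (cv n 0) = 1 := by
    rw [hdef6]; simp only [applyMove, m10, v5_0]; norm_num
  have v6_1 : K6 (cv n 1) = -2 := by
    rw [hdef6]; simp only [applyMove, m11, v5_1]; norm_num
  have v6_2 : K6 (cv n 2) = -1 := by
    rw [hdef6]; simp only [applyMove, m12, v5_2]; norm_num
  have v6_3 : K6 (cv n 3) = 3 := by
    rw [hdef6]; simp only [applyMove, m13, v5_3]; norm_num
  have v6_4 : K6 (cv n 4) = 2 := by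
    rw [hdef6]; simp only [applyMove, m14, v5_4]; norm_num
  have leg6 : K5 (cv n 1) + MG n (cv n 1) (cv n 1) = 0 := by
    rw [v5_1, m11]; norm_num
  set K7 : Fin (n+3) → ℤ := applyMove (MG n) K6 (cv n 0) with hdef7
  have v7_0 : K7 (cv n 0) = -1 := by
    rw [hdef7]; simp only [applyMove, m00, v6_0]; norm_num
  have v7_1 : K7 (cv n 1) = 0 := by
    rw [hdef7]; simp only [applyMove, m01, v6_1]; norm_num
  have v7_2 : K7 (cv n 2) = 1 := by
    rw [hdef7]; simp only [applyMove, m02, v6_2]; norm_num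
  have v7_3 : K7 (cv n 3) = 5 := by
    rw [hdef7]; simp only [applyMove, m03, v6_3]; norm_num
  have v7_4 : K7 (cv n 4) = 2 := by
    rw [hdef7]; simp only [applyMove, m04, v6_4]; norm_num
  have leg7 : K6 (cv n 0) + MG n (cv n 0) (cv n 0) = 0 := by
    rw [v6_0, m00]; norm_num
  set K8 : Fin (n+3) → ℤ := applyMove (MG n) K7 (cv n 4) with hdef8
  have v8_0 : K8 (cv n 0) = -1 := by
    rw [hdef8]; simp only [applyMove, m40, v7_0]; norm_num
  have v8_1 : K8 (cv n 1) = 0 := by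
    rw [hdef8]; simp only [applyMove, m41, v7_1]; norm_num
  have v8_2 : K8 (cv n 2) = 1 := by
    rw [hdef8]; simp only [applyMove, m42, v7_2]; norm_num
  have v8_3 : K8 (cv n 3) = 7 := by
    rw [hdef8]; simp only [applyMove, m43, v7_3]; norm_num
  have v8_4 : K8 (cv n 4) = -2 := by
    rw [hdef8]; simp only [applyMove, m44, v7_4]; norm_num
  have leg8 : K7 (cv n 4) + MG n (cv n 4) (cv n 4) = 0 := by
    rw [v7_4, m44]; norm_num
  set K9 : Fin (n+3) → ℤ := applyMove (MG n) K8 (cv n 3) with hdef9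
  have v9_0 : K9 (cv n 0) = 1 := by
    rw [hdef9]; simp only [applyMove, m30, v8_0]; norm_num
  have v9_1 : K9 (cv n 1) = 0 := by
    rw [hdef9]; simp only [applyMove, m31, v8_1]; norm_num
  have v9_2 : K9 (cv n 2) = 1 := by
    rw [hdef9]; simp only [applyMove, m32, v8_2]; norm_num
  have v9_3 : K9 (cv n 3) = -7 := by
    rw [hdef9]; simp only [applyMove, m33, v8_3]; norm_num
  have v9_4 : K9 (cv n 4) = 0 := by
    rw [hdef9]; simp only [applyMove, m34, v8_4]; norm_num
  have leg9 : K8 (cv n 3) + MG n (cv n 3) (cv n 3) = 0 := by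
    rw [v8_3, m33]; norm_num
  set K10 : Fin (n+3) → ℤ := applyMove (MG n) K9 (cv n 0) with hdef10
  have v10_0 : K10 (cv n 0) = -1 := by
    rw [hdef10]; simp only [applyMove, m00, v9_0]; norm_num
  have v10_1 : K10 (cv n 1) = 2 := by
    rw [hdef10]; simp only [applyMove, m01, v9_1]; norm_num
  have v10_2 : K10 (cv n 2) = 3 := by
    rw [hdef10]; simp only [applyMove, m02, v9_2]; norm_num
  have v10_3 : K10 (cv n 3) = -5 := by
    rw [hdef10]; simp only [applyMove, m03, v9_3]; norm_num
  have v10_4 : K10 (cv n 4) = 0 := by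
    rw [hdef10]; simp only [applyMove, m04, v9_4]; norm_num
  have leg10 : K9 (cv n 0) + MG n (cv n 0) (cv n 0) = 0 := by
    rw [v9_0, m00]; norm_num
  set K11 : Fin (n+3) → ℤ := applyMove (MG n) K10 (cv n 1) with hdef11
  have v11_0 : K11 (cv n 0) = 1 := by
    rw [hdef11]; simp only [applyMove, m10, v10_0]; norm_num
  have v11_1 : K11 (cv n 1) = -2 := by
    rw [hdef11]; simp only [applyMove, m11, v10_1]; norm_num
  have v11_2 : K11 (cv n 2) = 3 := by
    rw [hdef11]; simp only [applyMove, m12, v10_2]; norm_num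
  have v11_3 : K11 (cv n 3) = -5 := by
    rw [hdef11]; simp only [applyMove, m13, v10_3]; norm_num
  have v11_4 : K11 (cv n 4) = 0 := by
    rw [hdef11]; simp only [applyMove, m14, v10_4]; norm_num
  have leg11 : K10 (cv n 1) + MG n (cv n 1) (cv n 1) = 0 := by
    rw [v10_1, m11]; norm_num
  set K12 : Fin (n+3) → ℤ := applyMove (MG n) K11 (cv n 0) with hdef12
  have v12_0 : K12 (cv n 0) = -1 := by
    rw [hdef12]; simp only [applyMove, m00, v11_0]; norm_num
  have v12_1 : K12 (cv n 1) = 0 := by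
    rw [hdef12]; simp only [applyMove, m01, v11_1]; norm_num
  have v12_2 : K12 (cv n 2) = 5 := by
    rw [hdef12]; simp only [applyMove, m02, v11_2]; norm_num
  have v12_3 : K12 (cv n 3) = -3 := by
    rw [hdef12]; simp only [applyMove, m03, v11_3]; norm_num
  have v12_4 : K12 (cv n 4) = 0 := by
    rw [hdef12]; simp only [applyMove, m04, v11_4]; norm_num
  have leg12 : K11 (cv n 0) + MG n (cv n 0) (cv n 0) = 0 := by
    rw [v11_0, m00]; norm_num
  refine ⟨[cv n 0, cv n 1, cv n 0, cv n 2, cv n 0, cv n 1, cv n 0, cv n 4, cv n 3, cv n 0, cv n 1, cv n 0], ?_, ?_⟩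
  · exact ⟨leg1, leg2, leg3, leg4, leg5, leg6, leg7, leg8, leg9, leg10, leg11, leg12, trivial⟩
  · have hend : pathEnd (MG n) K [cv n 0, cv n 1, cv n 0, cv n 2, cv n 0, cv n 1, cv n 0, cv n 4, cv n 3, cv n 0, cv n 1, cv n 0] = K12 := rfl
    rw [hend, v12_2, m22]
    norm_num

/-- on `G_n` (`n ≥ 2`), every characteristic vector `K` satisfying the
inequalities, with first four pairings `(1, 0, -1, -3)` and some nonzero pairing among
positions `5,…,n+3`, admits a bad full path; hence the only basic vector with this
initial segment is `K_2 = (1,0,-1,-3,0,…,0)`. -/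
theorem only_basic_with_minus3 (n : ℕ) (hn : 2 ≤ n) (K : Fin (n + 3) → ℤ)
    (hchar : ∀ i, (2 : ℤ) ∣ (K i - MG n i i)) (hb : InBounds (MG n) K)
    (h0 : K ⟨0, by omega⟩ = 1) (h1 : K ⟨1, by omega⟩ = 0)
    (h2 : K ⟨2, by omega⟩ = -1) (h3 : K ⟨3, by omega⟩ = -3) :
    ((∃ i : Fin (n + 3), 4 ≤ i.val ∧ K i ≠ 0) → ∃ l, BadFullPath (MG n) K l) ∧
      (HasGoodPath (MG n) K → K = Kv n 2) := by
  classical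
  have hc0 : K (cv n 0) = 1 := by rw [cv_eq n 0 (by omega)]; exact h0
  have hc1 : K (cv n 1) = 0 := by rw [cv_eq n 1 (by omega)]; exact h1
  have hc2 : K (cv n 2) = -1 := by rw [cv_eq n 2 (by omega)]; exact h2
  have hc3 : K (cv n 3) = -3 := by rw [cv_eq n 3 (by omega)]; exact h3
  have htail : ∀ i : Fin (n + 3), 4 ≤ i.val → K i = 0 ∨ K i = 2 := by
    intro i hi
    have hM : MG n i i = -2 := by
      unfold MG; rw [if_pos rfl]; exact wt_tail hi
    have hbi := hb i
    have hch := hchar i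
    rw [hM] at hbi hch
    omega
  have part1 : (∃ i : Fin (n + 3), 4 ≤ i.val ∧ K i ≠ 0) → ∃ l, BadFullPath (MG n) K l := by
    rintro ⟨i, hi4, hiK⟩
    have hex : ∃ m, 4 ≤ m ∧ m ≤ n + 2 ∧ K (cv n m) ≠ 0 := by
      refine ⟨i.val, hi4, by omega, ?_⟩
      have hcvi : cv n i.val = i := Fin.ext (cv_val n i.val i.isLt)
      rw [hcvi]; exact hiK
    obtain ⟨hj4, hjle, hjne⟩ := Nat.find_spec hex
    have hKj : K (cv n (Nat.find hex)) = 2 := by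
      rcases htail (cv n (Nat.find hex)) (by rw [cv_val n _ (by omega)]; exact hj4) with h | h
      · exact absurd h hjne
      · exact h
    have hzero : ∀ m, 4 ≤ m → m < Nat.find hex → K (cv n m) = 0 := by
      intro m hm4 hmj
      have hnotP := Nat.find_min hex hmj
      by_contra hne
      exact hnotP ⟨hm4, by omega, hne⟩
    obtain ⟨l₁, hleg₁, hhead, h4end⟩ := phase1 n hn (Nat.find hex - 4) K (by omega)
      (by rw [show 4 + (Nat.find hex - 4) = Nat.find hex by omega]; exact hKj)
      (fun m hm1 hm2 => hzero m hm1 (by omega))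
    obtain ⟨l₂, hleg₂, hbad⟩ := phase2 n hn (pathEnd (MG n) K l₁)
      (by rw [hhead 0 (by omega)]; exact hc0) (by rw [hhead 1 (by omega)]; exact hc1)
      (by rw [hhead 2 (by omega)]; exact hc2) (by rw [hhead 3 (by omega)]; exact hc3) h4end
    refine ⟨l₁ ++ l₂, PathLegal_append (MG n) l₁ K hleg₁ l₂ hleg₂, cv n 2, ?_⟩
    rw [pathEnd_append]
    exact hbad
  refine ⟨part1, ?_⟩
  intro hgp
  funext i
  obtain ⟨m, hmlt⟩ := i
  by_cases hm0 : m = 0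
  · subst hm0; simp only [Kv]; norm_num; exact h0
  · by_cases hm1 : m = 1
    · subst hm1; simp only [Kv]; norm_num; exact h1
    · by_cases hm2 : m = 2
      · subst hm2; simp only [Kv]; norm_num; exact h2
      · by_cases hm3 : m = 3
        · subst hm3; simp only [Kv]; norm_num; exact h3
        · have hm4 : 4 ≤ m := by omega
          have hKv : Kv n 2 ⟨m, hmlt⟩ = 0 := by
            simp only [Kv]
            rw [if_neg (by simpa using hm0), if_neg (by simpa using hm1),
              if_neg (by simpa using hm2), if_neg (by simpa using hm3),
              if_neg (by norm_num)]
          rw [hKv]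
          by_contra hne
          obtain ⟨l, hbadl⟩ := part1 ⟨⟨m, hmlt⟩, by simpa using hm4, hne⟩
          exact no_good_of_bad (MG n) (MG_offdiag n) (MG_symm n) hgp hbadl
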